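/- Let R be a ring with identity, A an R-bimodule, and f, g : R × R → A functions satisfying: f(x,0) = f(0,y) = 0; g(x,0) = g(0,y) = g(1,y) = g(y,1) = 0; f(x,y) = f(y,x); f(y,z) − f(x+y,z) + f(x,y+z) − f(x,y) = 0; x·g(y,z) − g(xy,z) + g(x,yz) − g(x,y)·z = 0; x·f(y,z) − f(xy,xz) = g(x,y) + g(x,z) − g(x,y+z); and f(x,y)·z − f(xz,yz) = g(x,z) + g(y,z) − g(x+y,z) for all x, y, z ∈ R. Then the set S = A × R with operations (a,x) + (b,y) = (a + b + f(x,y), x+y) and (a,x)·(b,y) = (a·y + x·b + g(x,y), xy) is a ring with additive identity (0,0) and multiplicative identity (0,1); the projection σ : S → R, σ(a,x) = x, is a surjective ring homomorphism with σ(0,1) = 1; its kernel is A × {0}, and the product of any two elements of the kernel is zero. -/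
import Mathlib


/-- From an `R`-bimodule `A` and factor sets `f, g` satisfying the
normalization, symmetry, cocycle and distributivity relations, the crossed-product
operations make `S = A × R` a ring, the projection onto `R` is a surjective ring
homomorphism sending `(0,1)` to `1`, its kernel is `A × {0}`, and any two kernel
elements multiply to zero. -/
theorem crossed_product_is_singular_extension
    {R A : Type*} [Ring R] [Nontrivial R] [AddCommGroup A]
    -- the `R`-bimodule structure on `A`
    (sl : R → A → A) (sr : A → R → A)
    (hsl_add : ∀ x (a b : A), sl x (a + b) = sl x a + sl x b)
    (hsl_add' : ∀ x y (a : A), sl (x + y) a = sl x a + sl y a)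
    (hsr_add : ∀ (a b : A) x, sr (a + b) x = sr a x + sr b x)
    (hsr_add' : ∀ (a : A) x y, sr a (x + y) = sr a x + sr a y)
    (hsl_mul : ∀ x y (a : A), sl (x * y) a = sl x (sl y a))
    (hsr_mul : ∀ (a : A) x y, sr a (x * y) = sr (sr a x) y)
    (hslr : ∀ x (a : A) y, sr (sl x a) y = sl x (sr a y))
    (hsl_one : ∀ a : A, sl 1 a = a)
    (hsr_one : ∀ a : A, sr a 1 = a)
    -- the factor sets and their relations (2)-(6)
    (f g : R → R → A)
    (hf0 : ∀ x y : R, f x 0 = 0 ∧ f 0 y = 0)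
    (hg0 : ∀ x y : R, g x 0 = 0 ∧ g 0 y = 0 ∧ g 1 y = 0 ∧ g y 1 = 0)
    (hfcomm : ∀ x y : R, f x y = f y x)
    (hfcocycle : ∀ x y z : R, f y z - f (x + y) z + f x (y + z) - f x y = 0)
    (hgcocycle : ∀ x y z : R,
      sl x (g y z) - g (x * y) z + g x (y * z) - sr (g x y) z = 0)
    (hldist : ∀ x y z : R,
      sl x (f y z) - f (x * y) (x * z) = g x y + g x z - g x (y + z))
    (hrdist : ∀ x y z : R,
      sr (f x y) z - f (x * z) (y * z) = g x z + g y z - g (x + y) z)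
    -- the crossed-product operations on `S = A × R`
    (add' mul' : A × R → A × R → A × R)
    (hadd' : ∀ p q : A × R, add' p q = (p.1 + q.1 + f p.2 q.2, p.2 + q.2))
    (hmul' : ∀ p q : A × R,
      mul' p q = (sr p.1 q.2 + sl p.2 q.1 + g p.2 q.2, p.2 * q.2)) :
    -- `S` is a ring:
    (∀ p q r : A × R, add' (add' p q) r = add' p (add' q r)) ∧
    (∀ p q : A × R, add' p q = add' q p) ∧
    (∀ p : A × R, add' ((0 : A), (0 : R)) p = p) ∧
    (∀ p : A × R, ∃ q : A × R, add' p q = ((0 : A), (0 : R))) ∧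
    (∀ p q r : A × R, mul' (mul' p q) r = mul' p (mul' q r)) ∧
    (∀ p : A × R, mul' ((0 : A), (1 : R)) p = p ∧ mul' p ((0 : A), (1 : R)) = p) ∧
    (∀ p q r : A × R, mul' p (add' q r) = add' (mul' p q) (mul' p r)) ∧
    (∀ p q r : A × R, mul' (add' p q) r = add' (mul' p r) (mul' q r)) ∧
    -- the projection `σ (a, x) = x` is a surjective ring homomorphism with `σ (0,1) = 1`:
    (∀ x : R, ∃ p : A × R, p.2 = x) ∧
    (∀ p q : A × R, (add' p q).2 = p.2 + q.2) ∧
    (∀ p q : A × R, (mul' p q).2 = p.2 * q.2) ∧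
    (((0 : A), (1 : R)).2 = (1 : R)) ∧
    -- its kernel is `A × {0}`:
    (∀ p : A × R, p.2 = 0 ↔ ∃ a : A, p = (a, (0 : R))) ∧
    -- the kernel has null multiplication:
    (∀ p q : A × R, p.2 = 0 → q.2 = 0 → mul' p q = ((0 : A), (0 : R))) := by

  -- derived auxiliary facts
  have sl0 : ∀ a : A, sl 0 a = 0 := fun a => by
    have h := hsl_add' 0 0 a; rw [add_zero] at h; exact (left_eq_add.mp h)
  have slz : ∀ x : R, sl x (0 : A) = 0 := fun x => by
    have h := hsl_add x 0 0; rw [add_zero] at h; exact (left_eq_add.mp h)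
  have sr0 : ∀ a : A, sr a 0 = 0 := fun a => by
    have h := hsr_add' a 0 0; rw [add_zero] at h; exact (left_eq_add.mp h)
  have srz : ∀ x : R, sr (0 : A) x = 0 := fun x => by
    have h := hsr_add 0 0 x; rw [add_zero] at h; exact (left_eq_add.mp h)
  refine ⟨?_, ?_, ?_, ?_, ?_, ?_, ?_, ?_, ?_, ?_, ?_, ?_, ?_, ?_⟩
  · -- add assoc
    intro p q r
    simp only [hadd']
    refine Prod.ext ?_ (add_assoc _ _ _)
    dsimp only
    rw [eq_comm, ← sub_eq_zero, ← hfcocycle p.2 q.2 r.2]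
    abel
  · -- add comm
    intro p q
    simp only [hadd']
    refine Prod.ext ?_ (add_comm _ _)
    dsimp only
    rw [hfcomm p.2 q.2]; abel
  · -- zero
    intro p
    simp only [hadd', (hf0 0 p.2).2]
    refine Prod.ext ?_ (zero_add _)
    dsimp only; abel
  · -- neg
    intro p
    refine ⟨(-p.1 - f p.2 (-p.2), -p.2), ?_⟩
    simp only [hadd']
    refine Prod.ext ?_ (add_neg_cancel _)
    dsimp only; abel
  · -- mul assoc
    intro p q r
    simp only [hmul']
    refine Prod.ext ?_ (mul_assoc _ _ _)
    dsimp only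
    rw [hsr_add, hsr_add, hsr_mul, hslr, hsl_add, hsl_add, hsl_mul,
      eq_comm, ← sub_eq_zero, ← hgcocycle p.2 q.2 r.2]
    abel
  · -- one
    intro p
    constructor
    · simp only [hmul', srz, hsl_one, (hg0 0 p.2).2.2.1, one_mul]
      refine Prod.ext ?_ rfl
      dsimp only; abel
    · simp only [hmul', hsr_one, slz, (hg0 0 p.2).2.2.2, mul_one]
      refine Prod.ext ?_ rfl
      dsimp only; abel
  · -- left distrib
    intro p q r
    simp only [hmul', hadd']
    refine Prod.ext ?_ (mul_add _ _ _)
    dsimp only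
    rw [hsr_add', hsl_add, hsl_add, ← sub_eq_zero, ← sub_eq_zero.mpr (hldist p.2 q.2 r.2)]
    abel
  · -- right distrib
    intro p q r
    simp only [hmul', hadd']
    refine Prod.ext ?_ (add_mul _ _ _)
    dsimp only
    rw [hsr_add, hsr_add, hsl_add', ← sub_eq_zero, ← sub_eq_zero.mpr (hrdist p.2 q.2 r.2)]
    abel
  · -- surjective
    intro x; exact ⟨(0, x), rfl⟩
  · intro p q; rw [hadd']
  · intro p q; rw [hmul']
  · rfl
  · intro p
    constructor
    · intro h; exact ⟨p.1, Prod.ext rfl h⟩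
    · rintro ⟨a, rfl⟩; rfl
  · intro p q hp hq
    rw [hmul', hp, hq, sr0, sl0, (hg0 0 0).1, mul_zero]
    simp
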